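/- For every s > 0 and every natural number P, the P-th derivative of the Gaussian f(x) = exp(-x²/s²) satisfies sup_{x ∈ ℝ} |f^{(P)}(x)| ≤ √(2^P · P!) / s^P. -/

import Mathlib

open Real Complex MeasureTheory Set FourierTransform Filter

lemma aux_iteratedDeriv_ofReal {f : ℝ → ℝ} (hf : ContDiff ℝ (⊤ : ℕ∞) f) (n : ℕ) :
    iteratedDeriv n (fun x => ((f x : ℝ) : ℂ)) = fun x => ((iteratedDeriv n f x : ℝ) : ℂ) := by
  induction n with
  | zero => simp
  | succ n ih =>
    rw [iteratedDeriv_succ, iteratedDeriv_succ, ih]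
    funext x
    have h1 : DifferentiableAt ℝ (iteratedDeriv n f) x := by
      exact (hf.differentiable_iteratedDeriv n (by exact_mod_cast WithTop.coe_lt_top n)).differentiableAt
    exact (h1.hasDerivAt.ofReal_comp).deriv

lemma aux_exp_quad_integrable {a : ℝ} (ha : 0 < a) (c : ℝ) :
    Integrable (fun x : ℝ => Real.exp (c * x - a * x ^ 2)) := by
  have h := (integrable_cexp_quadratic (b := (a : ℂ)) (by simpa using ha) (c : ℂ) 0).norm
  convert h using 2 with x
  rw [Complex.norm_exp]
  congr 1
  have : -(a:ℂ) * (x:ℂ) ^ 2 + (c:ℂ) * (x:ℂ) + 0 = ((c * x - a * x ^ 2 : ℝ) : ℂ) := by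
    push_cast; ring
  rw [this, Complex.ofReal_re]

lemma aux_abs_moment_integrable (n : ℕ) {a : ℝ} (ha : 0 < a) :
    Integrable (fun x : ℝ => |x| ^ n * Real.exp (-a * x ^ 2)) := by
  have hb : Integrable (fun x : ℝ =>
      (n.factorial : ℝ) * Real.exp (1 * x - a * x ^ 2) +
      (n.factorial : ℝ) * Real.exp ((-1) * x - a * x ^ 2)) :=
    ((aux_exp_quad_integrable ha 1).const_mul _).add ((aux_exp_quad_integrable ha (-1)).const_mul _)
  refine hb.mono' ?_ (Filter.Eventually.of_forall fun x => ?_)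
  · exact ((_root_.continuous_abs.pow n).mul
      (((continuous_const.mul (continuous_pow 2)) : Continuous fun x : ℝ => -a * x ^ 2).rexp)).aestronglyMeasurable
  · have h0 : |x| ^ n ≤ (n.factorial : ℝ) * Real.exp |x| := by
      have h1 : |x| ^ n / (n.factorial : ℝ) ≤ Real.exp |x| := by
        calc |x| ^ n / (n.factorial : ℝ)
            ≤ ∑ i ∈ Finset.range (n + 1), |x| ^ i / (i.factorial : ℝ) := by
              refine Finset.single_le_sum (f := fun i => |x| ^ i / (i.factorial : ℝ))
                (fun i _ => by positivity) (Finset.self_mem_range_succ n)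
          _ ≤ Real.exp |x| := Real.sum_le_exp_of_nonneg (abs_nonneg x) (n + 1)
      calc |x| ^ n = (n.factorial : ℝ) * (|x| ^ n / (n.factorial : ℝ)) := by
            field_simp
        _ ≤ (n.factorial : ℝ) * Real.exp |x| := by
            exact mul_le_mul_of_nonneg_left h1 (by positivity)
    have h2 : Real.exp |x| ≤ Real.exp x + Real.exp (-x) := by
      rcases abs_cases x with ⟨h, _⟩ | ⟨h, _⟩ <;> rw [h] <;>
        [exact le_add_of_nonneg_right (Real.exp_pos _).le;
         exact le_add_of_nonneg_left (Real.exp_pos _).le]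
    rw [Real.norm_eq_abs, _root_.abs_of_nonneg (by positivity : (0:ℝ) ≤ |x| ^ n * Real.exp (-a * x ^ 2))]
    calc |x| ^ n * Real.exp (-a * x ^ 2)
        ≤ ((n.factorial : ℝ) * (Real.exp x + Real.exp (-x))) * Real.exp (-a * x ^ 2) := by
          refine mul_le_mul_of_nonneg_right (h0.trans ?_) (Real.exp_pos _).le
          exact mul_le_mul_of_nonneg_left h2 (by positivity)
      _ = (n.factorial : ℝ) * Real.exp (1 * x - a * x ^ 2) +
          (n.factorial : ℝ) * Real.exp ((-1) * x - a * x ^ 2) := by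
          rw [sub_eq_add_neg, sub_eq_add_neg, Real.exp_add, Real.exp_add]
          ring_nf

lemma aux_abs_moment (n : ℕ) {a : ℝ} (ha : 0 < a) :
    ∫ x : ℝ, |x| ^ n * Real.exp (-a * x ^ 2)
      = a ^ (-((n : ℝ) + 1) / 2) * Real.Gamma (((n : ℝ) + 1) / 2) := by
  have h1 : ∫ x : ℝ, |x| ^ n * Real.exp (-a * x ^ 2)
      = 2 * ∫ x in Ioi (0 : ℝ), x ^ n * Real.exp (-a * x ^ 2) := by
    rw [← integral_comp_abs (f := fun x => x ^ n * Real.exp (-a * x ^ 2))]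
    congr 1
    funext x
    rw [_root_.sq_abs]
  rw [h1]
  have h2 : ∫ x in Ioi (0 : ℝ), x ^ n * Real.exp (-a * x ^ 2)
      = ∫ x in Ioi (0 : ℝ), x ^ (n : ℝ) * Real.exp (-a * x ^ ((2 : ℕ) : ℝ)) := by
    refine (setIntegral_congr_fun measurableSet_Ioi fun x hx => ?_).symm
    rw [Real.rpow_natCast, Real.rpow_natCast]
  rw [h2, _root_.integral_rpow_mul_exp_neg_mul_rpow (by norm_num) (by exact lt_of_lt_of_le neg_one_lt_zero (Nat.cast_nonneg n)) ha]
  push_cast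
  ring


lemma aux_gamma_key : ∀ P : ℕ,
    (2 : ℝ) ^ P * Real.Gamma (((P : ℝ) + 1) / 2) ≤
      Real.sqrt π * Real.sqrt (2 ^ P * (Nat.factorial P : ℝ)) := by
  intro P
  induction P using Nat.strong_induction_on with
  | _ P ih =>
    match P with
    | 0 =>
      rw [show (((0:ℕ):ℝ) + 1)/2 = 1/2 by norm_num, Real.Gamma_one_half_eq]
      simp
    | 1 =>
      have h1 : ((1 : ℕ) : ℝ) + 1 = 2 := by norm_num
      rw [h1]
      norm_num [Real.Gamma_one]
      -- ⊢ 2 ≤ √π * √2  (roughly)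
      rw [← Real.sqrt_mul pi_pos.le]
      have h2 : (4 : ℝ) ≤ π * 2 := by nlinarith [Real.pi_gt_three]
      calc (2 : ℝ) = Real.sqrt 4 := by
            rw [show (4:ℝ) = 2 ^ 2 by norm_num, Real.sqrt_sq (by norm_num)]
        _ ≤ Real.sqrt (π * 2) := Real.sqrt_le_sqrt h2
    | (n + 2) =>
      have hprev := ih n (by omega)
      have hne : ((n : ℝ) + 1) / 2 ≠ 0 := by positivity
      have harg : (((n + 2 : ℕ) : ℝ) + 1) / 2 = ((n : ℝ) + 1) / 2 + 1 := by push_cast; ring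
      rw [harg, Real.Gamma_add_one hne]
      have hsq : 2 * ((n : ℝ) + 1) * Real.sqrt (2 ^ n * (Nat.factorial n : ℝ)) ≤
          Real.sqrt (2 ^ (n + 2) * (Nat.factorial (n + 2) : ℝ)) := by
        rw [show (2:ℝ) * ((n:ℝ)+1) * Real.sqrt (2 ^ n * (Nat.factorial n : ℝ))
            = Real.sqrt ((2 * ((n:ℝ)+1))^2 * (2 ^ n * (Nat.factorial n : ℝ))) from ?_]
        · apply Real.sqrt_le_sqrt
          have : (Nat.factorial (n + 2) : ℝ) = ((n:ℝ)+2) * ((n:ℝ)+1) * (Nat.factorial n : ℝ) := by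
            rw [Nat.factorial_succ, Nat.factorial_succ]; push_cast; ring
          rw [this]
          have hfac : (0:ℝ) ≤ (Nat.factorial n : ℝ) := Nat.cast_nonneg _
          have h2n : (0:ℝ) ≤ 2 ^ n := by positivity
          have hp : (2:ℝ) ^ (n + 2) = 4 * 2 ^ n := by ring
          nlinarith [mul_nonneg (mul_nonneg (by positivity : (0:ℝ) ≤ 4 * ((n:ℝ)+1)) h2n) hfac, hp]
        · rw [Real.sqrt_mul (by positivity : (0:ℝ) ≤ (2 * ((n:ℝ)+1))^2)
              ((2:ℝ) ^ n * (Nat.factorial n : ℝ)),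
            Real.sqrt_sq (by positivity : (0:ℝ) ≤ 2 * ((n:ℝ)+1))]
      calc (2:ℝ) ^ (n + 2) * (((n:ℝ)+1)/2 * Real.Gamma (((n:ℝ)+1)/2))
          = 2 * ((n:ℝ)+1) * ((2:ℝ) ^ n * Real.Gamma (((n:ℝ)+1)/2)) := by ring
        _ ≤ 2 * ((n:ℝ)+1) * (Real.sqrt π * Real.sqrt (2 ^ n * (Nat.factorial n : ℝ))) := by
            apply mul_le_mul_of_nonneg_left hprev (by positivity)
        _ = Real.sqrt π * (2 * ((n:ℝ)+1) * Real.sqrt (2 ^ n * (Nat.factorial n : ℝ))) := by ring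
        _ ≤ Real.sqrt π * Real.sqrt (2 ^ (n + 2) * (Nat.factorial (n + 2) : ℝ)) := by
            apply mul_le_mul_of_nonneg_left hsq (Real.sqrt_nonneg _)

/-- Derivative bound for the Gaussian: for `s > 0` and every `P ∈ ℕ`,
`sup_x |(d/dx)^P exp(-x²/s²)| ≤ √(2^P P!)/s^P`. -/
theorem gaussian_iteratedDeriv_bound (s : ℝ) (hs : 0 < s) (P : ℕ) :
    ∀ x : ℝ, |iteratedDeriv P (fun x : ℝ => Real.exp (-(x ^ 2 / s ^ 2))) x| ≤
      Real.sqrt (2 ^ P * Nat.factorial P) / s ^ P := by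
  intro x
  have hs2 : (0:ℝ) < s ^ 2 := by positivity
  set br : ℝ := π * s ^ 2 with hbr
  have hbrpos : 0 < br := by positivity
  set a : ℝ := π * br with ha
  have hapos : 0 < a := by positivity
  set c0 : ℂ := ((Real.sqrt br : ℝ) : ℂ) with hc0
  have hc0norm : ‖c0‖ = Real.sqrt br := by
    rw [hc0, Complex.norm_real, Real.norm_eq_abs,
      _root_.abs_of_nonneg (Real.sqrt_nonneg _)]
  set g : ℝ → ℂ := fun ξ : ℝ => c0 • Complex.exp (-(π:ℂ) * (br:ℂ) * (ξ:ℂ) ^ 2) with hg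
  have hgnorm : ∀ ξ : ℝ, ‖g ξ‖ = Real.sqrt br * Real.exp (-a * ξ ^ 2) := by
    intro ξ
    rw [hg]
    simp only [norm_smul, hc0norm]
    congr 1
    rw [Complex.norm_exp]
    congr 1
    have h : -(π:ℂ) * (br:ℂ) * (ξ:ℂ) ^ 2 = ((-a * ξ ^ 2 : ℝ) : ℂ) := by
      rw [ha]; push_cast; ring
    rw [h, Complex.ofReal_re]
  -- integrability
  have hInt : ∀ n : ℕ, Integrable (fun ξ : ℝ => (ξ : ℝ) ^ n • g ξ) := by
    intro n
    refine ((aux_abs_moment_integrable n hapos).const_mul (Real.sqrt br)).mono' ?_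
      (Filter.Eventually.of_forall fun ξ => ?_)
    · apply Continuous.aestronglyMeasurable
      exact (continuous_pow n).smul (show Continuous g by rw [hg]; exact ((continuous_const : Continuous fun _ : ℝ => c0).smul
        (Complex.continuous_exp.comp (by fun_prop : Continuous fun ξ : ℝ => -(π:ℂ) * (br:ℂ) * (ξ:ℂ) ^ 2))))
    · rw [norm_smul, hgnorm, norm_pow, Real.norm_eq_abs]
      exact le_of_eq (by ring)
  -- the Fourier transform of `g` is the Gaussian
  have hbc : 0 < ((br : ℝ) : ℂ).re := by simpa using hbrpos
  have hc0ne : c0 ≠ 0 := by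
    rw [hc0]
    exact Complex.ofReal_ne_zero.mpr (ne_of_gt (Real.sqrt_pos.mpr hbrpos))
  have hcpow : ((br : ℝ) : ℂ) ^ (1/2 : ℂ) = c0 := by
    rw [hc0, Real.sqrt_eq_rpow, Complex.ofReal_cpow hbrpos.le]
    norm_num
  have hexpc : ∀ t : ℝ, -(π:ℂ)/((br:ℝ):ℂ) * (t:ℂ)^2 = ((-(t^2/s^2) : ℝ) : ℂ) := by
    intro t
    have hπ : ((π:ℝ):ℂ) ≠ 0 := Complex.ofReal_ne_zero.mpr Real.pi_ne_zero
    have hsne : ((s:ℝ):ℂ) ≠ 0 := Complex.ofReal_ne_zero.mpr hs.ne'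
    rw [hbr]
    push_cast
    field_simp
  have hFg : 𝓕 g = fun t : ℝ => ((Real.exp (-(t^2/s^2)) : ℝ) : ℂ) := by
    funext t
    have hconst : 𝓕 g t
        = c0 • 𝓕 (fun ξ : ℝ => Complex.exp (-(π:ℂ) * (br:ℂ) * (ξ:ℂ)^2)) t := by
      rw [Real.fourier_eq, Real.fourier_eq, ← integral_smul]
      congr 1
      funext v
      rw [smul_comm]
    rw [hconst]
    rw [fourier_gaussian_pi hbc]
    beta_reduce
    rw [smul_eq_mul, hcpow, hexpc t, Complex.ofReal_exp]
    rw [← mul_assoc, mul_one_div, div_self hc0ne, one_mul]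
  -- smoothness of the Gaussian
  have hsm : ContDiff ℝ (⊤ : ℕ∞) (fun x : ℝ => Real.exp (-(x ^ 2 / s ^ 2))) :=
    Real.contDiff_exp.comp (((contDiff_id.pow 2).div_const (s ^ 2)).neg)
  have hod : iteratedDeriv P (fun t : ℝ => ((Real.exp (-(t ^ 2 / s ^ 2)) : ℝ) : ℂ))
      = fun t : ℝ =>
        ((iteratedDeriv P (fun x : ℝ => Real.exp (-(x ^ 2 / s ^ 2))) t : ℝ) : ℂ) :=
    aux_iteratedDeriv_ofReal hsm P
  have hL : |iteratedDeriv P (fun x : ℝ => Real.exp (-(x ^ 2 / s ^ 2))) x|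
      = ‖iteratedDeriv P (𝓕 g) x‖ := by
    rw [hFg, hod, Complex.norm_real, Real.norm_eq_abs]
  rw [hL]
  -- derivative of the Fourier transform
  have hD : iteratedDeriv P (𝓕 g)
      = 𝓕 (fun ξ : ℝ => (-2 * (π:ℂ) * Complex.I * (ξ:ℂ)) ^ P • g ξ) :=
    Real.iteratedDeriv_fourier (N := (⊤ : ℕ∞)) (fun n _ => hInt n) le_top
  rw [hD]
  have hbound : ‖𝓕 (fun ξ : ℝ => (-2 * (π:ℂ) * Complex.I * (ξ:ℂ)) ^ P • g ξ) x‖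
      ≤ ∫ v : ℝ, ‖(-2 * (π:ℂ) * Complex.I * (v:ℂ)) ^ P • g v‖ :=
    VectorFourier.norm_fourierIntegral_le_integral_norm _ _ _ _ _
  refine hbound.trans ?_
  have hnv : ∀ v : ℝ, ‖(-2 * (π:ℂ) * Complex.I * (v:ℂ))‖ = 2 * π * |v| := by
    intro v
    simp only [norm_mul, norm_neg, Complex.norm_real, Real.norm_eq_abs, Complex.norm_I, Complex.norm_two]
    rw [_root_.abs_of_pos Real.pi_pos, mul_one]
  have hIeq : (∫ v : ℝ, ‖(-2 * (π:ℂ) * Complex.I * (v:ℂ)) ^ P • g v‖)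
      = ((2 * π) ^ P * Real.sqrt br) * ∫ v : ℝ, |v| ^ P * Real.exp (-a * v ^ 2) := by
    rw [← integral_const_mul]
    congr 1
    funext v
    rw [norm_smul, norm_pow, hnv v, hgnorm v, mul_pow]
    ring
  rw [hIeq, aux_abs_moment P hapos]
  -- final arithmetic
  set G : ℝ := Real.Gamma (((P : ℝ) + 1) / 2) with hG
  have hGpos : 0 < G := Real.Gamma_pos_of_pos (by positivity)
  set u : ℝ := Real.sqrt π with hu
  have hupos : 0 < u := Real.sqrt_pos.mpr Real.pi_pos
  have hu2 : u ^ 2 = π := Real.sq_sqrt Real.pi_pos.le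
  have hps : (0:ℝ) < π * s := by positivity
  have haeq : a = (π * s) ^ 2 := by rw [ha, hbr]; ring
  have hrp : a ^ (-((P : ℝ) + 1) / 2) = ((π * s) ^ (P + 1))⁻¹ := by
    rw [haeq, ← Real.rpow_natCast (π * s) 2, ← Real.rpow_mul hps.le,
      show ((2:ℕ):ℝ) * (-((P : ℝ) + 1) / 2) = -(((P + 1 : ℕ)):ℝ) by push_cast; ring,
      Real.rpow_neg hps.le, Real.rpow_natCast]
  have hsb : Real.sqrt br = u * s := by
    rw [hbr, hu, Real.sqrt_mul Real.pi_pos.le, Real.sqrt_sq hs.le]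
  rw [hrp, hsb]
  have hLeq : (2 * π) ^ P * (u * s) * (((π * s) ^ (P + 1))⁻¹ * G)
      = (2 ^ P * G) / (u * s ^ P) := by
    have hπu : π = u ^ 2 := hu2.symm
    rw [hπu]
    field_simp
    ring
  rw [hLeq]
  have hkey := aux_gamma_key P
  rw [div_le_div_iff₀ (by positivity) (by positivity)]
  have hcast : Real.sqrt (2 ^ P * (Nat.factorial P : ℝ))
      = Real.sqrt ((2:ℝ) ^ P * (Nat.factorial P : ℕ)) := by norm_num
  have h2 : 2 ^ P * G ≤ u * Real.sqrt (2 ^ P * (Nat.factorial P : ℝ)) := hkey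
  calc 2 ^ P * G * s ^ P ≤ (u * Real.sqrt (2 ^ P * (Nat.factorial P : ℝ))) * s ^ P :=
        mul_le_mul_of_nonneg_right h2 (by positivity)
    _ = Real.sqrt (2 ^ P * (Nat.factorial P : ℝ)) * (u * s ^ P) := by ring
    _ = Real.sqrt (2 ^ P * (Nat.factorial P : ℕ)) * (u * s ^ P) := by norm_num
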